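/- Let N ≥ 7 be an integer and set p := (N+2)/(N-2), so 1 < p < 2. Define f : ℝ → ℝ by f(s) := |s|^{p-1}·s, whose derivative is f'(s) = p·|s|^{p-1}. Then there exists a constant C > 0, depending only on p, such that for all real numbers a, b₁, b₂ one has | f(a+b₁) - f(a+b₂) - p·|a|^{p-1}·(b₁-b₂) | ≤ C·( |b₁|^{p-1} + |b₂|^{p-1} )·|b₁ - b₂|. -/

import Mathlib

open Real

private lemma aux_add_rpow {u v q : ℝ} (hu : 0 ≤ u) (hv : 0 ≤ v) (hq : 0 ≤ q) (hq1 : q ≤ 1) :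
    (u + v) ^ q ≤ u ^ q + v ^ q := by
  lift u to NNReal using hu
  lift v to NNReal using hv
  have := NNReal.rpow_add_le_add_rpow u v hq hq1
  exact_mod_cast this

private lemma aux_holder {u v q : ℝ} (hu : 0 ≤ u) (hv : 0 ≤ v) (hq : 0 ≤ q) (hq1 : q ≤ 1) :
    |u ^ q - v ^ q| ≤ |u - v| ^ q := by
  have key : ∀ u v : ℝ, 0 ≤ u → 0 ≤ v → v ≤ u → u ^ q - v ^ q ≤ (u - v) ^ q := by
    intro u v hu hv hvu
    have h1 : u ^ q ≤ (u - v) ^ q + v ^ q := by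
      have := aux_add_rpow (sub_nonneg.2 hvu) hv hq hq1
      rwa [sub_add_cancel] at this
    linarith
  rcases le_total v u with h | h
  · rw [abs_of_nonneg (sub_nonneg.2 h), abs_sub_le_iff]
    refine ⟨key u v hu hv h, ?_⟩
    have h1 : v ^ q ≤ u ^ q := Real.rpow_le_rpow hv h hq
    have h2 : (0:ℝ) ≤ (u - v) ^ q := Real.rpow_nonneg (sub_nonneg.2 h) q
    linarith
  · rw [abs_sub_comm, abs_sub_comm u v, abs_of_nonneg (sub_nonneg.2 h), abs_sub_le_iff]
    refine ⟨key v u hv hu h, ?_⟩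
    have h1 : u ^ q ≤ v ^ q := Real.rpow_le_rpow hu h hq
    have h2 : (0:ℝ) ≤ (v - u) ^ q := Real.rpow_nonneg (sub_nonneg.2 h) q
    linarith

private lemma aux_hasDerivAt {q : ℝ} (hq : 1 < q) (s : ℝ) :
    HasDerivAt (fun s : ℝ => |s| ^ (q - 1) * s) (q * |s| ^ (q - 1)) s := by
  rcases lt_trichotomy s 0 with hs | rfl | hs
  · -- s < 0 : function equals -(-s)^q near s
    have h1 : HasDerivAt (fun x : ℝ => -((-x) ^ q)) (q * (-s) ^ (q - 1)) s := by
      have h2 : HasDerivAt (fun x : ℝ => (-x) ^ q) (q * (-s) ^ (q - 1) * (-1)) s :=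
        (hasDerivAt_rpow_const (p := q) (x := -s) (Or.inl (by linarith))).comp s
          (hasDerivAt_neg s)
      have h3 := h2.neg
      exact h3.congr_deriv (by ring)
    have heq : (fun x : ℝ => |x| ^ (q - 1) * x) =ᶠ[nhds s] fun x : ℝ => -((-x) ^ q) := by
      filter_upwards [Iio_mem_nhds hs] with x hx
      have hx0 : x < 0 := hx
      have hne : (-x : ℝ) ≠ 0 := by intro h; apply absurd hx0; simp [neg_eq_zero.1 h]
      have hpow : (-x : ℝ) ^ q = (-x) ^ (q - 1) * (-x) := by
        rw [← Real.rpow_add_one hne]; ring_nf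
      rw [abs_of_neg hx0, hpow]; ring
    have h4 := h1.congr_of_eventuallyEq heq
    rwa [abs_of_neg hs]
  · -- s = 0
    have hq0 : (0:ℝ) ^ (q - 1) = 0 := Real.zero_rpow (by linarith)
    rw [abs_zero, hq0, mul_zero]
    rw [hasDerivAt_iff_tendsto_slope]
    have htend : Filter.Tendsto (fun x : ℝ => |x| ^ (q - 1)) (nhds 0) (nhds 0) := by
      have h1 : Filter.Tendsto (fun x : ℝ => |x|) (nhds 0) (nhds 0) := by
        simpa using continuous_abs.tendsto (0:ℝ)
      have h2 : Filter.Tendsto (fun y : ℝ => y ^ (q - 1)) (nhds 0) (nhds 0) := by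
        have := (Real.continuousAt_rpow_const 0 (q - 1) (Or.inr (by linarith))).tendsto
        simpa [hq0] using this
      exact h2.comp h1
    have hsl : (fun x : ℝ => slope (fun s : ℝ => |s| ^ (q - 1) * s) 0 x) =ᶠ[nhdsWithin 0 {0}ᶜ]
        fun x : ℝ => |x| ^ (q - 1) := by
      filter_upwards [self_mem_nhdsWithin] with x hx
      have hx0 : x ≠ 0 := hx
      simp only [slope_def_field, hq0, mul_zero, sub_zero, div_eq_iff hx0]
    exact (htend.mono_left nhdsWithin_le_nhds).congr' hsl.symm
  · -- s > 0
    have h1 : HasDerivAt (fun x : ℝ => x ^ q) (q * s ^ (q - 1)) s :=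
      hasDerivAt_rpow_const (Or.inl (ne_of_gt hs))
    have heq : (fun x : ℝ => |x| ^ (q - 1) * x) =ᶠ[nhds s] fun x : ℝ => x ^ q := by
      filter_upwards [Ioi_mem_nhds hs] with x hx
      have hx0 : (0:ℝ) < x := hx
      have hpow : x ^ q = x ^ (q - 1) * x := by
        rw [← Real.rpow_add_one (ne_of_gt hx0)]; ring_nf
      rw [abs_of_pos hx0, hpow]
    have h4 := h1.congr_of_eventuallyEq heq
    rwa [abs_of_pos hs]

/-- Lemma 2.5 of the paper: for `N ≥ 7` and `p = (N+2)/(N-2)`,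
with `f(s) = |s|^(p-1) s` and `f'(s) = p |s|^(p-1)`, there exists `C > 0`, depending
only on `p`, such that for all reals `a, b₁, b₂`,
`|f(a+b₁) - f(a+b₂) - f'(a)(b₁-b₂)| ≤ C (|b₁|^(p-1) + |b₂|^(p-1)) |b₁ - b₂|`. -/
theorem stmt_5 (N : ℕ) (hN : 7 ≤ N) (p : ℝ) (hp : p = ((N : ℝ) + 2) / ((N : ℝ) - 2))
    (f : ℝ → ℝ) (hf : ∀ s, f s = |s| ^ (p - 1) * s) :
    ∃ C : ℝ, 0 < C ∧
      ∀ a b₁ b₂ : ℝ,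
        |f (a + b₁) - f (a + b₂) - p * |a| ^ (p - 1) * (b₁ - b₂)| ≤
          C * (|b₁| ^ (p - 1) + |b₂| ^ (p - 1)) * |b₁ - b₂| := by
  have hN' : (7:ℝ) ≤ (N:ℝ) := by exact_mod_cast hN
  have hden : (0:ℝ) < (N:ℝ) - 2 := by linarith
  have hp1 : 1 < p := by
    rw [hp, lt_div_iff₀ hden]; linarith
  have hp2 : p ≤ 2 := by
    rw [hp, div_le_iff₀ hden]; linarith
  have hfe : f = fun s : ℝ => |s| ^ (p - 1) * s := funext hf
  refine ⟨p, by linarith, fun a b₁ b₂ => ?_⟩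
  set M : ℝ := p * (|b₁| ^ (p - 1) + |b₂| ^ (p - 1)) with hM
  set g : ℝ → ℝ := fun x => f x - p * |a| ^ (p - 1) * x with hg
  have hgderiv : ∀ x : ℝ, HasDerivAt g (p * |x| ^ (p - 1) - p * |a| ^ (p - 1)) x := by
    intro x
    have h1 : HasDerivAt f (p * |x| ^ (p - 1)) x := by
      rw [hfe]; exact aux_hasDerivAt hp1 x
    have h2 : HasDerivAt (fun x : ℝ => p * |a| ^ (p - 1) * x) (p * |a| ^ (p - 1)) x := by
      simpa using (hasDerivAt_id x).const_mul (p * |a| ^ (p - 1))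
    exact h1.sub h2
  set s : Set ℝ := segment ℝ (a + b₂) (a + b₁) with hs
  have hbound : ∀ x ∈ s, ‖p * |x| ^ (p - 1) - p * |a| ^ (p - 1)‖ ≤ M := by
    intro x hx
    have hxa : |x - a| ≤ |b₁| + |b₂| := by
      obtain ⟨t₁, t₂, ht₁, ht₂, hsum, rfl⟩ := hx
      have hxe : t₁ • (a + b₂) + t₂ • (a + b₁) - a = t₁ * b₂ + t₂ * b₁ := by
        simp only [smul_eq_mul]; linear_combination a * hsum
      rw [hxe]
      calc |t₁ * b₂ + t₂ * b₁| ≤ |t₁ * b₂| + |t₂ * b₁| := abs_add_le _ _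
        _ = t₁ * |b₂| + t₂ * |b₁| := by
            rw [abs_mul, abs_mul, abs_of_nonneg ht₁, abs_of_nonneg ht₂]
        _ ≤ |b₁| + |b₂| := by
            have h1 : t₁ * |b₂| ≤ |b₂| := mul_le_of_le_one_left (abs_nonneg b₂) (by linarith)
            have h2 : t₂ * |b₁| ≤ |b₁| := mul_le_of_le_one_left (abs_nonneg b₁) (by linarith)
            linarith
    have key : ‖p * |x| ^ (p - 1) - p * |a| ^ (p - 1)‖ ≤ p * |x - a| ^ (p - 1) := by
      rw [Real.norm_eq_abs, ← mul_sub, abs_mul, abs_of_pos (by linarith : (0:ℝ) < p)]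
      gcongr
      calc abs (|x| ^ (p - 1) - |a| ^ (p - 1)) ≤ (abs (|x| - |a|)) ^ (p - 1) :=
            aux_holder (abs_nonneg _) (abs_nonneg _) (by linarith) (by linarith)
        _ ≤ |x - a| ^ (p - 1) := by
            apply Real.rpow_le_rpow (abs_nonneg _) (abs_abs_sub_abs_le_abs_sub _ _)
            linarith
    refine key.trans ?_
    rw [hM]
    gcongr
    calc |x - a| ^ (p - 1) ≤ (|b₁| + |b₂|) ^ (p - 1) :=
          Real.rpow_le_rpow (abs_nonneg _) hxa (by linarith)
      _ ≤ |b₁| ^ (p - 1) + |b₂| ^ (p - 1) :=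
          aux_add_rpow (abs_nonneg _) (abs_nonneg _) (by linarith) (by linarith)
  have hmvt := Convex.norm_image_sub_le_of_norm_hasDerivWithin_le
    (f := g) (f' := fun x => p * |x| ^ (p - 1) - p * |a| ^ (p - 1)) (s := s)
    (fun x _ => (hgderiv x).hasDerivWithinAt) hbound (convex_segment _ _)
    (left_mem_segment ℝ _ _) (right_mem_segment ℝ _ _)
  have heq : g (a + b₁) - g (a + b₂) =
      f (a + b₁) - f (a + b₂) - p * |a| ^ (p - 1) * (b₁ - b₂) := by
    simp only [hg]; ring
  have hnorm : ‖(a + b₁ : ℝ) - (a + b₂)‖ = |b₁ - b₂| := by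
    rw [Real.norm_eq_abs]; congr 1; ring
  rw [heq, hnorm] at hmvt
  rw [Real.norm_eq_abs] at hmvt
  calc |f (a + b₁) - f (a + b₂) - p * |a| ^ (p - 1) * (b₁ - b₂)| ≤ M * |b₁ - b₂| := hmvt
    _ = p * (|b₁| ^ (p - 1) + |b₂| ^ (p - 1)) * |b₁ - b₂| := by rw [hM]
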